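/- Let f, g : [a,b] → ℝ be continuous with f(x) < g(x) for all x ∈ [a,b], let u, v be C² functions on [a,b] satisfying u'' + f·u = 0 and v'' + g·v = 0, and assume a and b are two consecutive zeros of u with u not identically zero. Then v has at least one zero in the open interval (a,b). -/

import Mathlib

open Set Filter Topology

private lemma sturm_sign_const {a b : ℝ} (hab : a < b) {φ : ℝ → ℝ}
    (hc : ContinuousOn φ (Set.Icc a b)) (hne : ∀ x ∈ Set.Ioo a b, φ x ≠ 0) :
    (∀ x ∈ Set.Ioo a b, 0 < φ x) ∨ (∀ x ∈ Set.Ioo a b, φ x < 0) := by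
  by_contra h
  push_neg at h
  obtain ⟨⟨x₁, hx₁, h₁⟩, ⟨x₂, hx₂, h₂⟩⟩ := h
  have h₁' : φ x₁ < 0 := lt_of_le_of_ne h₁ (hne x₁ hx₁)
  have h₂' : 0 < φ x₂ := lt_of_le_of_ne h₂ (Ne.symm (hne x₂ hx₂))
  have hsub : Set.uIcc x₁ x₂ ⊆ Set.Ioo a b :=
    Set.ordConnected_Ioo.uIcc_subset hx₁ hx₂
  have := intermediate_value_uIcc (hc.mono (hsub.trans Set.Ioo_subset_Icc_self))
  have h0 : (0 : ℝ) ∈ Set.uIcc (φ x₁) (φ x₂) :=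
    Set.mem_uIcc.2 (Or.inl ⟨h₁'.le, h₂'.le⟩)
  obtain ⟨z, hz, hz0⟩ := this h0
  exact hne z (hsub hz) hz0

private lemma sturm_aux (a b : ℝ) (hab : a < b) (f g : ℝ → ℝ)
    (hfg : ∀ x ∈ Set.Icc a b, f x < g x)
    (u u' u'' v v' v'' : ℝ → ℝ)
    (hu' : ∀ x ∈ Set.Icc a b, HasDerivWithinAt u (u' x) (Set.Icc a b) x)
    (hu'' : ∀ x ∈ Set.Icc a b, HasDerivWithinAt u' (u'' x) (Set.Icc a b) x)
    (hv' : ∀ x ∈ Set.Icc a b, HasDerivWithinAt v (v' x) (Set.Icc a b) x)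
    (hv'' : ∀ x ∈ Set.Icc a b, HasDerivWithinAt v' (v'' x) (Set.Icc a b) x)
    (huODE : ∀ x ∈ Set.Icc a b, u'' x + f x * u x = 0)
    (hvODE : ∀ x ∈ Set.Icc a b, v'' x + g x * v x = 0)
    (hua : u a = 0) (hub : u b = 0)
    (hupos : ∀ x ∈ Set.Ioo a b, 0 < u x)
    (hvpos : ∀ x ∈ Set.Ioo a b, 0 < v x) : False := by
  have haI : a ∈ Set.Icc a b := Set.left_mem_Icc.2 hab.le
  have hbI : b ∈ Set.Icc a b := Set.right_mem_Icc.2 hab.le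
  set W : ℝ → ℝ := fun x => u' x * v x - u x * v' x with hWdef
  have hWd : ∀ x ∈ Set.Icc a b,
      HasDerivWithinAt W (u'' x * v x - u x * v'' x) (Set.Icc a b) x := by
    intro x hx
    have h := ((hu'' x hx).mul (hv' x hx)).sub ((hu' x hx).mul (hv'' x hx))
    refine h.congr_deriv ?_
    ring
  have hWc : ContinuousOn W (Set.Icc a b) := fun x hx =>
    (hWd x hx).continuousWithinAt
  have hmono : StrictMonoOn W (Set.Icc a b) := by
    apply strictMonoOn_of_deriv_pos (convex_Icc a b) hWc
    intro x hx
    rw [interior_Icc] at hx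
    have hx' : x ∈ Set.Icc a b := Set.Ioo_subset_Icc_self hx
    have hd : HasDerivAt W (u'' x * v x - u x * v'' x) x :=
      (hWd x hx').hasDerivAt (Icc_mem_nhds hx.1 hx.2)
    rw [hd.deriv]
    have e1 : u'' x = -(f x * u x) := by linarith [huODE x hx']
    have e2 : v'' x = -(g x * v x) := by linarith [hvODE x hx']
    rw [e1, e2]
    have hpos : 0 < (g x - f x) * (u x * v x) :=
      mul_pos (sub_pos.2 (hfg x hx')) (mul_pos (hupos x hx) (hvpos x hx))
    nlinarith [hpos]
  have hWab : W a < W b := hmono haI hbI hab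
  -- filters
  have hNa : (𝓝[Set.Ioo a b] a).NeBot := by
    rw [← mem_closure_iff_nhdsWithin_neBot, closure_Ioo hab.ne]
    exact ⟨le_rfl, hab.le⟩
  have hNb : (𝓝[Set.Ioo a b] b).NeBot := by
    rw [← mem_closure_iff_nhdsWithin_neBot, closure_Ioo hab.ne]
    exact ⟨hab.le, le_rfl⟩
  -- v a ≥ 0 and v b ≥ 0
  have hva : 0 ≤ v a := by
    have hc : Tendsto v (𝓝[Set.Ioo a b] a) (𝓝 (v a)) :=
      (hv' a haI).continuousWithinAt.mono Set.Ioo_subset_Icc_self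
    exact ge_of_tendsto hc (eventually_mem_nhdsWithin.mono fun x hx => (hvpos x hx).le)
  have hvb : 0 ≤ v b := by
    have hc : Tendsto v (𝓝[Set.Ioo a b] b) (𝓝 (v b)) :=
      (hv' b hbI).continuousWithinAt.mono Set.Ioo_subset_Icc_self
    exact ge_of_tendsto hc (eventually_mem_nhdsWithin.mono fun x hx => (hvpos x hx).le)
  -- u' a ≥ 0
  have hdiffa : Set.Ioo a b \ {a} = Set.Ioo a b :=
    Set.diff_singleton_eq_self (fun h => lt_irrefl a h.1)
  have hdiffb : Set.Ioo a b \ {b} = Set.Ioo a b :=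
    Set.diff_singleton_eq_self (fun h => lt_irrefl b h.2)
  have hu'a : 0 ≤ u' a := by
    have hs := hasDerivWithinAt_iff_tendsto_slope.1
      ((hu' a haI).mono Set.Ioo_subset_Icc_self)
    rw [hdiffa] at hs
    refine ge_of_tendsto hs (eventually_mem_nhdsWithin.mono fun x hx => ?_)
    rw [slope_def_field]
    exact div_nonneg (by rw [hua]; linarith [hupos x hx]) (by linarith [hx.1])
  have hu'b : u' b ≤ 0 := by
    have hs := hasDerivWithinAt_iff_tendsto_slope.1
      ((hu' b hbI).mono Set.Ioo_subset_Icc_self)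
    rw [hdiffb] at hs
    refine le_of_tendsto hs (eventually_mem_nhdsWithin.mono fun x hx => ?_)
    rw [slope_def_field]
    apply div_nonpos_of_nonneg_of_nonpos
    · rw [hub]; linarith [hupos x hx]
    · linarith [hx.2]
  have hWa : 0 ≤ W a := by
    simp only [hWdef, hua, zero_mul, mul_zero, sub_zero]
    exact mul_nonneg hu'a hva
  have hWb : W b ≤ 0 := by
    simp only [hWdef, hub, zero_mul, mul_zero, sub_zero]
    exact mul_nonpos_of_nonpos_of_nonneg hu'b hvb
  linarith

theorem sturm_comparison (a b : ℝ) (hab : a < b) (f g : ℝ → ℝ)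
    (hf : ContinuousOn f (Set.Icc a b)) (hg : ContinuousOn g (Set.Icc a b))
    (hfg : ∀ x ∈ Set.Icc a b, f x < g x)
    (u u' u'' v v' v'' : ℝ → ℝ)
    (hu' : ∀ x ∈ Set.Icc a b, HasDerivWithinAt u (u' x) (Set.Icc a b) x)
    (hu'' : ∀ x ∈ Set.Icc a b, HasDerivWithinAt u' (u'' x) (Set.Icc a b) x)
    (hu''cont : ContinuousOn u'' (Set.Icc a b))
    (hv' : ∀ x ∈ Set.Icc a b, HasDerivWithinAt v (v' x) (Set.Icc a b) x)
    (hv'' : ∀ x ∈ Set.Icc a b, HasDerivWithinAt v' (v'' x) (Set.Icc a b) x)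
    (hv''cont : ContinuousOn v'' (Set.Icc a b))
    (huODE : ∀ x ∈ Set.Icc a b, u'' x + f x * u x = 0)
    (hvODE : ∀ x ∈ Set.Icc a b, v'' x + g x * v x = 0)
    (hua : u a = 0) (hub : u b = 0)
    (hconsec : ∀ x ∈ Set.Ioo a b, u x ≠ 0) :
    ∃ x ∈ Set.Ioo a b, v x = 0 := by
  by_contra h
  push_neg at h
  have hucont : ContinuousOn u (Set.Icc a b) := fun x hx =>
    (hu' x hx).continuousWithinAt
  have hvcont : ContinuousOn v (Set.Icc a b) := fun x hx =>
    (hv' x hx).continuousWithinAt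
  have hvne : ∀ x ∈ Set.Ioo a b, v x ≠ 0 := h
  have husign := sturm_sign_const hab hucont hconsec
  have hvsign := sturm_sign_const hab hvcont hvne
  -- normalize to positive functions
  rcases husign with hup | hun
  · rcases hvsign with hvp | hvn
    · exact sturm_aux a b hab f g hfg u u' u'' v v' v'' hu' hu'' hv' hv''
        huODE hvODE hua hub hup hvp
    · exact sturm_aux a b hab f g hfg u u' u''
        (fun x => -v x) (fun x => -v' x) (fun x => -v'' x)
        hu' hu'' (fun x hx => (hv' x hx).neg) (fun x hx => (hv'' x hx).neg)
        huODE (fun x hx => by have := hvODE x hx; ring_nf; ring_nf at this; linarith)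
        hua hub hup
        (fun x hx => by simpa using (hvn x hx))
  · rcases hvsign with hvp | hvn
    · exact sturm_aux a b hab f g hfg
        (fun x => -u x) (fun x => -u' x) (fun x => -u'' x) v v' v''
        (fun x hx => (hu' x hx).neg) (fun x hx => (hu'' x hx).neg)
        hv' hv''
        (fun x hx => by have := huODE x hx; ring_nf; ring_nf at this; linarith)
        hvODE (by simp [hua]) (by simp [hub])
        (fun x hx => by simpa using (hun x hx))
        hvp
    · exact sturm_aux a b hab f g hfg
        (fun x => -u x) (fun x => -u' x) (fun x => -u'' x)
        (fun x => -v x) (fun x => -v' x) (fun x => -v'' x)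
        (fun x hx => (hu' x hx).neg) (fun x hx => (hu'' x hx).neg)
        (fun x hx => (hv' x hx).neg) (fun x hx => (hv'' x hx).neg)
        (fun x hx => by have := huODE x hx; ring_nf; ring_nf at this; linarith)
        (fun x hx => by have := hvODE x hx; ring_nf; ring_nf at this; linarith)
        (by simp [hua]) (by simp [hub])
        (fun x hx => by simpa using (hun x hx))
        (fun x hx => by simpa using (hvn x hx))
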